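/- Let G be a D-regular Bonnet-Myers sharp graph of diameter L with pole x_0. For x_1 ∈ S_1(x_0) and x_2 ∈ S_2(x_0), the out-degrees satisfy d⁺(x_1) − d⁺(x_2) = (1/2)d⁰(x_2) + 1. -/

import Mathlib

open Finset

namespace BMS

open scoped Classical

variable {V : Type*}

/-- The uniform probability measure on the closed 1-ball of `x` in a `D`-regular graph. -/
noncomputable def mu (G : SimpleGraph V) (D : ℕ) (x : V) : V → ℝ :=
  fun v => if G.dist x v ≤ 1 then 1 / (D + 1) else 0

/-- The L¹-Wasserstein distance between `μ_x` and `μ_y`, as an infimum over transport plans. -/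
noncomputable def W1 (G : SimpleGraph V) [Fintype V] (D : ℕ) (x y : V) : ℝ :=
  sInf { c : ℝ | ∃ π : V → V → ℝ,
    (∀ u v, 0 ≤ π u v) ∧
    (∀ u, ∑ v, π u v = mu G D x u) ∧
    (∀ v, ∑ u, π u v = mu G D y v) ∧
    c = ∑ u, ∑ v, (G.dist u v : ℝ) * π u v }

/-- Ollivier Ricci curvature (Lin–Lu–Yau normalization for regular graphs). -/
noncomputable def kappa (G : SimpleGraph V) [Fintype V] (D : ℕ) (x y : V) : ℝ :=
  ((D + 1) / D) * (1 - W1 G D x y)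

/-- `G` is Bonnet–Myers sharp: the infimum of the curvature over edges equals `2 / L`. -/
def BMSharp (G : SimpleGraph V) [Fintype V] (D L : ℕ) : Prop :=
  sInf { k : ℝ | ∃ x y, G.Adj x y ∧ k = kappa G D x y } = 2 / (L : ℝ)

/-- Number of neighbors of `y` at distance `k` from `x0`. -/
noncomputable def sphDeg (G : SimpleGraph V) [Fintype V] (x0 y : V) (k : ℕ) : ℕ :=
  (Finset.univ.filter (fun v => G.Adj y v ∧ G.dist x0 v = k)).card

/-- Number of triangles containing the edge `x ~ y` (common neighbors of `x` and `y`). -/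
noncomputable def tri (G : SimpleGraph V) [Fintype V] (x y : V) : ℕ :=
  (Finset.univ.filter (fun v => G.Adj x v ∧ G.Adj y v)).card

/-- A good optimal transport map from `B_1(a)` to `B_1(b)`: a bijection between the 1-balls,
fixing exactly the vertices of `B_1(a) ∩ B_1(b)` (among the domain), whose cost realizes
the Wasserstein distance `W1 (μ_a, μ_b)`. -/
def goodMap (G : SimpleGraph V) [Fintype V] (D : ℕ) (a b : V) (T : V → V) : Prop :=
  Set.BijOn T {v | G.dist a v ≤ 1} {v | G.dist b v ≤ 1} ∧
  (∀ v, G.dist a v ≤ 1 → (T v = v ↔ G.dist b v ≤ 1)) ∧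
  (1 / (D + 1 : ℝ)) *
      ∑ v ∈ Finset.univ.filter (fun v => G.dist a v ≤ 1), (G.dist v (T v) : ℝ) =
    W1 G D a b

section Aux

noncomputable def ball (G : SimpleGraph V) [Fintype V] (x : V) : Finset V :=
  Finset.univ.filter (fun v => G.dist x v ≤ 1)

noncomputable def bsum (G : SimpleGraph V) [Fintype V] (f : V → ℝ) (x : V) : ℝ :=
  ∑ v ∈ ball G x, f v

variable [Fintype V] {G : SimpleGraph V}

lemma ball_eq (hconn : G.Connected) (x : V) :
    ball G x = insert x (G.neighborFinset x) := by
  ext v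
  simp only [ball, mem_filter, mem_univ, true_and, mem_insert, SimpleGraph.mem_neighborFinset]
  constructor
  · intro h
    interval_cases h' : G.dist x v
    · left; exact (hconn.dist_eq_zero_iff.mp h').symm ▸ rfl
    · right; exact SimpleGraph.dist_eq_one_iff_adj.mp h'
  · rintro (rfl | h)
    · simp [SimpleGraph.dist_self]
    · exact le_of_eq (SimpleGraph.dist_eq_one_iff_adj.mpr h)

lemma ball_card (hconn : G.Connected) {D : ℕ} (hreg : G.IsRegularOfDegree D) (x : V) :
    (ball G x).card = D + 1 := by
  rw [ball_eq hconn, card_insert_of_notMem (by simp), G.card_neighborFinset_eq_degree, hreg x]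

lemma bsum_eq (hconn : G.Connected) (f : V → ℝ) (x : V) :
    bsum G f x = f x + ∑ v ∈ G.neighborFinset x, f v := by
  rw [bsum, ball_eq hconn, sum_insert (by simp)]

lemma mu_apply (G : SimpleGraph V) (D : ℕ) (x v : V) :
    mu G D x v = if v ∈ ball G x then 1 / (D + 1 : ℝ) else 0 := by
  simp [mu, ball]

lemma inner_mu (G : SimpleGraph V) (D : ℕ) (f : V → ℝ) (x : V) :
    ∑ v, f v * mu G D x v = (1 / (D + 1 : ℝ)) * bsum G f x := by
  simp only [mu_apply, mul_ite, mul_zero]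
  rw [Finset.sum_ite_mem, Finset.univ_inter, bsum, Finset.mul_sum]
  exact Finset.sum_congr rfl (fun v _ => mul_comm _ _)

lemma sum_mu (hconn : G.Connected) {D : ℕ} (hreg : G.IsRegularOfDegree D) (x : V) :
    ∑ v, mu G D x v = 1 := by
  have := inner_mu G D (fun _ => (1:ℝ)) x
  simp only [one_mul] at this
  rw [this, bsum, Finset.sum_const, ball_card hconn hreg, nsmul_eq_mul, mul_one]
  push_cast
  field_simp


-- the transport set is nonempty
lemma W1_set_nonempty (hconn : G.Connected) {D : ℕ} (hreg : G.IsRegularOfDegree D) (x y : V) :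
    { c : ℝ | ∃ π : V → V → ℝ,
      (∀ u v, 0 ≤ π u v) ∧
      (∀ u, ∑ v, π u v = mu G D x u) ∧
      (∀ v, ∑ u, π u v = mu G D y v) ∧
      c = ∑ u, ∑ v, (G.dist u v : ℝ) * π u v }.Nonempty := by
  refine ⟨_, fun u v => mu G D x u * mu G D y v, fun u v => ?_, fun u => ?_, fun v => ?_, rfl⟩
  · apply mul_nonneg <;> · rw [mu_apply]; positivity
  · rw [← Finset.mul_sum, sum_mu hconn hreg, mul_one]
  · rw [← Finset.sum_mul, sum_mu hconn hreg, one_mul]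

-- Kantorovich duality, easy direction
lemma duality (hconn : G.Connected) {D : ℕ} (hreg : G.IsRegularOfDegree D)
    (f : V → ℝ) (hf : ∀ u v, f v - f u ≤ (G.dist u v : ℝ)) (x y : V) :
    (1 / (D + 1 : ℝ)) * (bsum G f y - bsum G f x) ≤ W1 G D x y := by
  apply le_csInf (W1_set_nonempty hconn hreg x y)
  rintro c ⟨π, hpos, hrow, hcol, rfl⟩
  have key : ∑ u, ∑ v, (G.dist u v : ℝ) * π u v ≥
      ∑ u, ∑ v, (f v - f u) * π u v := by
    apply Finset.sum_le_sum; intro u _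
    apply Finset.sum_le_sum; intro v _
    exact mul_le_mul_of_nonneg_right (hf u v) (hpos u v)
  have expand : ∑ u, ∑ v, (f v - f u) * π u v
      = ∑ v, f v * mu G D y v - ∑ u, f u * mu G D x u := by
    have h1 : ∑ u, ∑ v, (f v - f u) * π u v
        = ∑ u, ∑ v, f v * π u v - ∑ u, ∑ v, f u * π u v := by
      rw [← Finset.sum_sub_distrib]
      refine Finset.sum_congr rfl fun u _ => ?_
      rw [← Finset.sum_sub_distrib]
      refine Finset.sum_congr rfl fun v _ => by ring
    rw [h1, Finset.sum_comm (f := fun u v => f v * π u v)]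
    congr 1
    · exact Finset.sum_congr rfl fun v _ => by rw [← Finset.mul_sum, hcol v]
    · exact Finset.sum_congr rfl fun u _ => by rw [← Finset.mul_sum, hrow u]
  rw [inner_mu, inner_mu, ← mul_sub] at expand
  linarith [key, expand.symm]

-- per-edge W1 upper bound from Bonnet-Myers sharpness
lemma W1_edge_le {D L : ℕ} (hD : 0 < D) (hL : 0 < L) (hBM : BMSharp G D L)
    {x y : V} (hadj : G.Adj x y) :
    W1 G D x y ≤ 1 - 2 * D / ((D + 1 : ℝ) * L) := by
  have hsub : { k : ℝ | ∃ x y, G.Adj x y ∧ k = kappa G D x y }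
      ⊆ Set.range (fun p : V × V => kappa G D p.1 p.2) := by
    rintro k ⟨a, b, _, rfl⟩; exact ⟨(a, b), rfl⟩
  have hbdd : BddBelow { k : ℝ | ∃ x y, G.Adj x y ∧ k = kappa G D x y } :=
    ((Set.finite_range _).subset hsub).bddBelow
  have hmem : kappa G D x y ∈ { k : ℝ | ∃ x y, G.Adj x y ∧ k = kappa G D x y } :=
    ⟨x, y, hadj, rfl⟩
  have hle : (2 / (L : ℝ)) ≤ kappa G D x y := hBM ▸ csInf_le hbdd hmem
  have hDpos : (0:ℝ) < D := by exact_mod_cast hD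
  have hLpos : (0:ℝ) < L := by exact_mod_cast hL
  rw [kappa] at hle
  have h2 : 2 / (L:ℝ) * (D / (D+1)) ≤ 1 - W1 G D x y := by
    have hfrac : (0:ℝ) < (D + 1) / D := by positivity
    calc 2 / (L:ℝ) * (D / (D+1)) ≤ ((D+1)/D) * (1 - W1 G D x y) * (D / (D+1)) :=
          mul_le_mul_of_nonneg_right hle (by positivity)
      _ = 1 - W1 G D x y := by field_simp
  have : 2 / (L:ℝ) * ((D:ℝ) / (D+1)) = 2 * D / ((D + 1 : ℝ) * L) := by
    field_simp
  linarith [h2, this]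

-- per-edge integrated bound
lemma star_edge (hconn : G.Connected) {D L : ℕ} (hD : 0 < D) (hL : 0 < L)
    (hreg : G.IsRegularOfDegree D) (hBM : BMSharp G D L)
    (f : V → ℝ) (hf : ∀ u v, f v - f u ≤ (G.dist u v : ℝ)) {a b : V} (hadj : G.Adj a b) :
    bsum G f b - bsum G f a ≤ (D + 1 : ℝ) - 2 * D / L := by
  have h1 := duality hconn hreg f hf a b
  have h2 := W1_edge_le hD hL hBM hadj
  have hDpos : (0:ℝ) < D := by exact_mod_cast hD
  have hLpos : (0:ℝ) < L := by exact_mod_cast hL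
  have hD1 : (0:ℝ) < (D:ℝ) + 1 := by positivity
  have key : (1 / (D + 1 : ℝ)) * (bsum G f b - bsum G f a) ≤ 1 - 2 * D / ((D + 1 : ℝ) * L) :=
    le_trans h1 h2
  have := mul_le_mul_of_nonneg_left key (le_of_lt hD1)
  calc bsum G f b - bsum G f a
      = ((D:ℝ)+1) * ((1 / (D + 1 : ℝ)) * (bsum G f b - bsum G f a)) := by field_simp
    _ ≤ ((D:ℝ)+1) * (1 - 2 * D / ((D + 1 : ℝ) * L)) := this
    _ = (D + 1 : ℝ) - 2 * D / L := by field_simp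

-- the key telescoping bound
lemma star (hconn : G.Connected) {D L : ℕ} (hD : 0 < D) (hL : 0 < L)
    (hreg : G.IsRegularOfDegree D) (hBM : BMSharp G D L)
    (f : V → ℝ) (hf : ∀ u v, f v - f u ≤ (G.dist u v : ℝ)) (a b : V) :
    bsum G f b - bsum G f a ≤ (G.dist a b : ℝ) * ((D + 1 : ℝ) - 2 * D / L) := by
  obtain ⟨w, hw⟩ := hconn.exists_walk_length_eq_dist a b
  rw [← hw]
  clear hw
  induction w with
  | nil => simp
  | cons h w ih =>
      rename_i u c d _
      have step := star_edge hconn hD hL hreg hBM f hf h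
      simp only [SimpleGraph.Walk.length_cons]
      push_cast
      linarith


lemma sphDeg_eq (G : SimpleGraph V) (x0 x : V) (j : ℕ) :
    sphDeg G x0 x j = ((G.neighborFinset x).filter (fun v => G.dist x0 v = j)).card := by
  rw [sphDeg]
  congr 1
  ext v
  simp [SimpleGraph.mem_neighborFinset]

lemma dist_lip (hconn : G.Connected) (x0 : V) :
    ∀ u v : V, ((G.dist x0 v : ℝ)) - (G.dist x0 u : ℝ) ≤ (G.dist u v : ℝ) := by
  intro u v
  have := hconn.dist_triangle (u := x0) (v := u) (w := v)
  have h2 : (G.dist x0 v : ℝ) ≤ (G.dist x0 u : ℝ) + (G.dist u v : ℝ) := by exact_mod_cast this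
  linarith

lemma nbr_dist_bounds (hconn : G.Connected) {x0 x v : V} (h : G.Adj x v) :
    G.dist x0 x ≤ G.dist x0 v + 1 ∧ G.dist x0 v ≤ G.dist x0 x + 1 := by
  have hd : G.dist x v = 1 := SimpleGraph.dist_eq_one_iff_adj.mpr h
  have hd' : G.dist v x = 1 := SimpleGraph.dist_eq_one_iff_adj.mpr h.symm
  constructor
  · have := hconn.dist_triangle (u := x0) (v := v) (w := x)
    omega
  · have := hconn.dist_triangle (u := x0) (v := x) (w := v)
    omega

lemma sum_nbr_dist (hconn : G.Connected) {x0 x : V} {k : ℕ} (hk : G.dist x0 x = k + 1) :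
    ∑ v ∈ G.neighborFinset x, (G.dist x0 v : ℝ)
      = k * sphDeg G x0 x k + (k+1) * sphDeg G x0 x (k+1) + (k+2) * sphDeg G x0 x (k+2) := by
  have hpt : ∀ v ∈ G.neighborFinset x, (G.dist x0 v : ℝ)
      = (if G.dist x0 v = k then (k:ℝ) else 0)
        + (if G.dist x0 v = k+1 then ((k:ℝ)+1) else 0)
        + (if G.dist x0 v = k+2 then ((k:ℝ)+2) else 0) := by
    intro v hv
    have hb := nbr_dist_bounds (x0 := x0) hconn ((G.mem_neighborFinset _ _).mp hv)
    have h1 : k ≤ G.dist x0 v := by omega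
    have h2 : G.dist x0 v ≤ k + 2 := by omega
    have h3 : G.dist x0 v = k ∨ G.dist x0 v = k+1 ∨ G.dist x0 v = k+2 := by omega
    rcases h3 with h3 | h3 | h3 <;> rw [h3] <;> simp <;> push_cast <;> ring
  rw [Finset.sum_congr rfl hpt]
  rw [Finset.sum_add_distrib, Finset.sum_add_distrib]
  rw [← Finset.sum_filter, ← Finset.sum_filter, ← Finset.sum_filter]
  rw [Finset.sum_const, Finset.sum_const, Finset.sum_const]
  rw [sphDeg_eq, sphDeg_eq, sphDeg_eq]
  push_cast
  ring

lemma count_nbr (hconn : G.Connected) {D : ℕ} (hreg : G.IsRegularOfDegree D)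
    {x0 x : V} {k : ℕ} (hk : G.dist x0 x = k + 1) :
    sphDeg G x0 x k + sphDeg G x0 x (k+1) + sphDeg G x0 x (k+2) = D := by
  have hpt : ∀ v ∈ G.neighborFinset x, (1:ℕ)
      = (if G.dist x0 v = k then (1:ℕ) else 0)
        + (if G.dist x0 v = k+1 then (1:ℕ) else 0)
        + (if G.dist x0 v = k+2 then (1:ℕ) else 0) := by
    intro v hv
    have hb := nbr_dist_bounds (x0 := x0) hconn ((G.mem_neighborFinset _ _).mp hv)
    have h1 : k ≤ G.dist x0 v := by omega
    have h2 : G.dist x0 v ≤ k + 2 := by omega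
    have h3 : G.dist x0 v = k ∨ G.dist x0 v = k+1 ∨ G.dist x0 v = k+2 := by omega
    rcases h3 with h3 | h3 | h3 <;> rw [h3] <;> simp <;> omega
  have hcard : ∑ v ∈ G.neighborFinset x, (1:ℕ) = D := by
    rw [Finset.sum_const, smul_eq_mul, mul_one, G.card_neighborFinset_eq_degree, hreg x]
  rw [Finset.sum_congr rfl hpt, Finset.sum_add_distrib, Finset.sum_add_distrib] at hcard
  rw [← Finset.sum_filter, ← Finset.sum_filter, ← Finset.sum_filter] at hcard
  simp only [Finset.sum_const, smul_eq_mul, mul_one] at hcard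
  rw [sphDeg_eq, sphDeg_eq, sphDeg_eq]
  exact hcard

lemma sphDeg_zero (hconn : G.Connected) {x0 z : V} (hz : G.dist x0 z = 1) :
    sphDeg G x0 z 0 = 1 := by
  rw [sphDeg]
  have : Finset.univ.filter (fun v => G.Adj z v ∧ G.dist x0 v = 0) = {x0} := by
    ext v
    simp only [Finset.mem_filter, Finset.mem_univ, true_and, Finset.mem_singleton]
    constructor
    · rintro ⟨_, hd⟩
      exact (hconn.dist_eq_zero_iff.mp hd).symm
    · rintro rfl
      exact ⟨(SimpleGraph.dist_eq_one_iff_adj.mp hz).symm, hconn.dist_eq_zero_iff.mpr rfl⟩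
  rw [this, Finset.card_singleton]

lemma bsum_dist_self (hconn : G.Connected) {D : ℕ} (hreg : G.IsRegularOfDegree D) (x : V) :
    bsum G (fun v => (G.dist x v : ℝ)) x = D := by
  rw [bsum_eq hconn]
  have : ∀ v ∈ G.neighborFinset x, ((G.dist x v : ℝ)) = 1 := by
    intro v hv
    have := SimpleGraph.dist_eq_one_iff_adj.mpr ((G.mem_neighborFinset _ _).mp hv)
    exact_mod_cast congrArg (Nat.cast : ℕ → ℝ) this
  rw [Finset.sum_congr rfl this, Finset.sum_const, SimpleGraph.dist_self]
  rw [G.card_neighborFinset_eq_degree, hreg x]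
  simp


lemma pole_nbrs (hconn : G.Connected) {D L : ℕ} (hD : 0 < D) (hL : 0 < L)
    (hreg : G.IsRegularOfDegree D) (hdiam : G.diam = L) (hBM : BMSharp G D L)
    {x0 p : V} (hp : G.dist x0 p = L) :
    ∀ v, G.Adj p v → G.dist x0 v + 1 = L := by
  have hub : ∀ u v, G.dist u v ≤ L := fun u v => by
    have h1 : G.ediam ≠ ⊤ := SimpleGraph.ediam_ne_top_of_diam_ne_zero (by rw [hdiam]; omega)
    have := SimpleGraph.dist_le_diam (G := G) h1 (u := u) (v := v)
    omega
  have hLR : (L:ℝ) ≠ 0 := by positivity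
  set g : V → ℝ := fun v => (G.dist x0 v : ℝ) with hg
  have hf := dist_lip hconn x0
  have hstar := star hconn hD hL hreg hBM g hf x0 p
  rw [hp] at hstar
  have hb0 : bsum G g x0 = D := bsum_dist_self hconn hreg x0
  have hbp : bsum G g p = (L:ℝ) + ∑ v ∈ G.neighborFinset p, g v := by
    rw [bsum_eq hconn]; simp [hg, hp]
  have hlow : ∀ v ∈ G.neighborFinset p, ((L:ℝ) - 1) ≤ g v := by
    intro v hv
    have hadj := (G.mem_neighborFinset _ _).mp hv
    have htri := hconn.dist_triangle (u := x0) (v := v) (w := p)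
    have hvp : G.dist v p = 1 := SimpleGraph.dist_eq_one_iff_adj.mpr hadj.symm
    have : L ≤ G.dist x0 v + 1 := by omega
    have : (L:ℝ) ≤ (G.dist x0 v : ℝ) + 1 := by exact_mod_cast this
    simp only [hg]; linarith
  have hsplit : ∑ v ∈ G.neighborFinset p, g v
      = (∑ v ∈ G.neighborFinset p, (g v - ((L:ℝ)-1))) + (D:ℝ) * ((L:ℝ)-1) := by
    rw [Finset.sum_sub_distrib, Finset.sum_const, G.card_neighborFinset_eq_degree, hreg p]
    push_cast; ring
  have hC : (L:ℝ) * ((D:ℝ)+1 - 2*(D:ℝ)/(L:ℝ)) = (L:ℝ)*((D:ℝ)+1) - 2*(D:ℝ) := by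
    field_simp
  have hT : (∑ v ∈ G.neighborFinset p, (g v - ((L:ℝ)-1))) ≤ 0 := by
    push_cast at hstar hb0 hbp ⊢
    nlinarith [hstar, hb0, hbp, hsplit, hC]
  have hzero := (Finset.sum_eq_zero_iff_of_nonneg
    (fun v hv => sub_nonneg.mpr (hlow v hv))).mp (le_antisymm hT (Finset.sum_nonneg
    (fun v hv => sub_nonneg.mpr (hlow v hv))))
  intro v hadj
  have hv : v ∈ G.neighborFinset p := (G.mem_neighborFinset _ _).mpr hadj
  have := hzero v hv
  have hR : (G.dist x0 v : ℝ) + 1 = (L:ℝ) := by simp only [hg] at this; linarith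
  exact_mod_cast hR

lemma E1 (hconn : G.Connected) {D L : ℕ} (hD : 0 < D) (hL : 0 < L)
    (hreg : G.IsRegularOfDegree D) (hdiam : G.diam = L) (hBM : BMSharp G D L)
    {x0 p z : V} (hp : G.dist x0 p = L) (hz : G.dist x0 z = 1) :
    (sphDeg G x0 z 1 : ℝ) + 2 * (sphDeg G x0 z 2 : ℝ) = 2*(D:ℝ) - 2*(D:ℝ)/(L:ℝ) := by
  have hLR : (L:ℝ) ≠ 0 := by positivity
  have hA := pole_nbrs hconn hD hL hreg hdiam hBM hp
  have hp' : G.dist p x0 = L := by rw [SimpleGraph.dist_comm]; exact hp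
  have hB := pole_nbrs hconn hD hL hreg hdiam hBM hp'
  set g : V → ℝ := fun v => (G.dist x0 v : ℝ) with hg
  have hf := dist_lip hconn x0
  -- ball sum at z
  have hbz : bsum G g z = 1 + ((sphDeg G x0 z 1 : ℝ) + 2 * (sphDeg G x0 z 2 : ℝ)) := by
    rw [bsum_eq hconn, sum_nbr_dist hconn (k := 0) hz]
    simp [hg, hz]
  -- ball sum at p
  have hbp : bsum G g p = (L:ℝ) + (D:ℝ) * ((L:ℝ)-1) := by
    rw [bsum_eq hconn]
    have : ∀ v ∈ G.neighborFinset p, g v = (L:ℝ) - 1 := by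
      intro v hv
      have := hA v ((G.mem_neighborFinset _ _).mp hv)
      have : (G.dist x0 v : ℝ) + 1 = (L:ℝ) := by exact_mod_cast this
      simp only [hg]; linarith
    rw [Finset.sum_congr rfl this, Finset.sum_const, G.card_neighborFinset_eq_degree, hreg p]
    simp [hg, hp]
  have hb0 : bsum G g x0 = D := bsum_dist_self hconn hreg x0
  -- upper bound
  have hup := star hconn hD hL hreg hBM g hf x0 z
  rw [hz] at hup
  -- lower bound
  have hzp : (G.dist z p : ℝ) = (L:ℝ) - 1 := by
    rw [SimpleGraph.dist_comm]
    have := hB z (SimpleGraph.dist_eq_one_iff_adj.mp hz)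
    have : (G.dist p z : ℝ) + 1 = (L:ℝ) := by exact_mod_cast this
    linarith
  have hlo := star hconn hD hL hreg hBM g hf z p
  rw [hzp] at hlo
  have hC : (L:ℝ) * ((D:ℝ)+1 - 2*(D:ℝ)/(L:ℝ)) = (L:ℝ)*((D:ℝ)+1) - 2*(D:ℝ) := by
    field_simp
  have hC2 : ((L:ℝ)-1) * ((D:ℝ)+1 - 2*(D:ℝ)/(L:ℝ))
      = (L:ℝ)*((D:ℝ)+1) - ((D:ℝ)+1) - 2*(D:ℝ) + 2*(D:ℝ)/(L:ℝ) := by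
    field_simp; ring
  push_cast at hup hlo hbz hbp hb0
  linarith [hup, hlo, hbz, hbp, hb0, hC2]

end Aux

theorem stmt [Fintype V] (G : SimpleGraph V) (hconn : G.Connected)
    (D L : ℕ) (hD : 0 < D) (hL : 0 < L) (hreg : G.IsRegularOfDegree D)
    (hdiam : G.diam = L) (hBM : BMSharp G D L)
    (x0 : V) (hpole : ∃ p, G.dist x0 p = L)
    (x1 x2 : V) (hx1 : G.dist x0 x1 = 1) (hx2 : G.dist x0 x2 = 2) :
    (sphDeg G x0 x1 2 : ℝ) - (sphDeg G x0 x2 3 : ℝ)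
      = (sphDeg G x0 x2 2 : ℝ) / 2 + 1 := by
  classical
  obtain ⟨p, hp⟩ := hpole
  have hLR : (L:ℝ) ≠ 0 := by positivity
  have hub : ∀ u v, G.dist u v ≤ L := fun u v => by
    have h1 : G.ediam ≠ ⊤ := SimpleGraph.ediam_ne_top_of_diam_ne_zero (by rw [hdiam]; omega)
    have := SimpleGraph.dist_le_diam (G := G) h1 (u := u) (v := v)
    omega
  have hL2 : 2 ≤ L := by have := hub x0 x2; omega
  have hA := pole_nbrs hconn hD hL hreg hdiam hBM hp
  have hp' : G.dist p x0 = L := by rw [SimpleGraph.dist_comm]; exact hp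
  have hB := pole_nbrs hconn hD hL hreg hdiam hBM hp'
  -- find z1 with x0 ~ z1 ~ x2
  obtain ⟨w, hw⟩ := hconn.exists_walk_length_eq_dist x0 x2
  rw [hx2] at hw
  cases w with
  | nil => simp at hw
  | cons h1 w' =>
    rename_i z1
    cases w' with
    | nil => simp at hw
    | cons h2 w'' =>
      rename_i c
      simp only [SimpleGraph.Walk.length_cons] at hw
      have hw2 : w''.length = 0 := by omega
      have hc : c = x2 := SimpleGraph.Walk.eq_of_length_eq_zero hw2
      rw [hc] at h2
      -- basic facts about z1
      have hz1 : G.dist x0 z1 = 1 := SimpleGraph.dist_eq_one_iff_adj.mpr h1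
      have e1z : (sphDeg G x0 z1 1 : ℝ) + 2 * (sphDeg G x0 z1 2 : ℝ)
          = 2*(D:ℝ) - 2*(D:ℝ)/(L:ℝ) := E1 hconn hD hL hreg hdiam hBM hp hz1
      have s0z : sphDeg G x0 z1 0 = 1 := sphDeg_zero hconn hz1
      have cntz : sphDeg G x0 z1 0 + sphDeg G x0 z1 1 + sphDeg G x0 z1 2 = D :=
        count_nbr hconn hreg (k := 0) hz1
      rw [s0z] at cntz
      have cntzR : (1:ℝ) + (sphDeg G x0 z1 1 : ℝ) + (sphDeg G x0 z1 2 : ℝ) = D := by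
        exact_mod_cast cntz
      have hs1 : (sphDeg G x0 z1 1 : ℝ) = 2*(D:ℝ)/(L:ℝ) - 2 := by linarith
      have hs2 : (sphDeg G x0 z1 2 : ℝ) = (D:ℝ) + 1 - 2*(D:ℝ)/(L:ℝ) := by linarith
      have hdpz1 : (G.dist p z1 : ℝ) = (L:ℝ) - 1 := by
        have := hB z1 h1
        have h' : (G.dist p z1 : ℝ) + 1 = (L:ℝ) := by exact_mod_cast this
        linarith
      ----------------------------------------------------------------
      -- Step 5 : d(p, x2) = L - 2
      ----------------------------------------------------------------
      set g' : V → ℝ := fun v => (G.dist p v : ℝ) with hg'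
      have hf' := dist_lip hconn p
      have hstar5 := star hconn hD hL hreg hBM g' hf' p z1
      rw [hdpz1] at hstar5
      have hbp' : bsum G g' p = D := bsum_dist_self hconn hreg p
      set N := G.neighborFinset z1 with hN
      set F0 := N.filter (fun v => G.dist x0 v = 0) with hF0
      set F1 := N.filter (fun v => G.dist x0 v = 1) with hF1
      set F2 := N.filter (fun v => G.dist x0 v = 2) with hF2
      have hsplitN : ∑ v ∈ N, g' v = ∑ v ∈ F0, g' v + ∑ v ∈ F1, g' v + ∑ v ∈ F2, g' v := by
        have hpt : ∀ v ∈ N, g' v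
            = (if G.dist x0 v = 0 then g' v else 0)
              + (if G.dist x0 v = 1 then g' v else 0)
              + (if G.dist x0 v = 2 then g' v else 0) := by
          intro v hv
          have hb := nbr_dist_bounds (x0 := x0) hconn ((G.mem_neighborFinset _ _).mp hv)
          have h3 : G.dist x0 v = 0 ∨ G.dist x0 v = 1 ∨ G.dist x0 v = 2 := by omega
          rcases h3 with h3 | h3 | h3 <;> rw [h3] <;> norm_num
        rw [Finset.sum_congr rfl hpt, Finset.sum_add_distrib, Finset.sum_add_distrib,
          ← Finset.sum_filter, ← Finset.sum_filter, ← Finset.sum_filter]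
      have hF0eq : F0 = {x0} := by
        ext v
        simp only [hF0, hN, Finset.mem_filter, SimpleGraph.mem_neighborFinset,
          Finset.mem_singleton]
        constructor
        · rintro ⟨_, hd⟩; exact (hconn.dist_eq_zero_iff.mp hd).symm
        · rintro rfl; exact ⟨h1.symm, hconn.dist_eq_zero_iff.mpr rfl⟩
      have hsum0 : ∑ v ∈ F0, g' v = (L:ℝ) := by
        rw [hF0eq, Finset.sum_singleton]
        simp only [hg']
        exact_mod_cast congrArg (Nat.cast : ℕ → ℝ) hp'
      have hsum1 : ∑ v ∈ F1, g' v = (sphDeg G x0 z1 1 : ℝ) * ((L:ℝ) - 1) := by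
        have : ∀ v ∈ F1, g' v = (L:ℝ) - 1 := by
          intro v hv
          rw [hF1, Finset.mem_filter] at hv
          have hadjv : G.Adj x0 v := SimpleGraph.dist_eq_one_iff_adj.mp hv.2
          have := hB v hadjv
          have h' : (G.dist p v : ℝ) + 1 = (L:ℝ) := by exact_mod_cast this
          simp only [hg']; linarith
        rw [Finset.sum_congr rfl this, Finset.sum_const, hF1, hN, ← sphDeg_eq]
        rw [nsmul_eq_mul]
      have hcard2 : F2.card = sphDeg G x0 z1 2 := by rw [hF2, hN, ← sphDeg_eq]
      have hx2mem : x2 ∈ F2 := by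
        rw [hF2, Finset.mem_filter, hN, SimpleGraph.mem_neighborFinset]
        exact ⟨h2, hx2⟩
      have hlow2 : ∀ v ∈ F2, (L:ℝ) - 2 ≤ g' v := by
        intro v hv
        rw [hF2, Finset.mem_filter] at hv
        have htri := hconn.dist_triangle (u := x0) (v := v) (w := p)
        rw [hv.2, hp, SimpleGraph.dist_comm (u := v)] at htri
        have h' : (L:ℝ) ≤ 2 + (G.dist p v : ℝ) := by exact_mod_cast htri
        simp only [hg']; linarith
      have hsum2 : ∑ v ∈ F2, g' v
          = (∑ v ∈ F2, (g' v - ((L:ℝ) - 2))) + (sphDeg G x0 z1 2 : ℝ) * ((L:ℝ) - 2) := by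
        rw [Finset.sum_sub_distrib, Finset.sum_const, hcard2, nsmul_eq_mul]
        ring
      have hsingle : g' x2 - ((L:ℝ) - 2) ≤ ∑ v ∈ F2, (g' v - ((L:ℝ) - 2)) :=
        Finset.single_le_sum (fun v hv => sub_nonneg.mpr (hlow2 v hv)) hx2mem
      have hbz1' : bsum G g' z1 = ((L:ℝ) - 1) + (∑ v ∈ N, g' v) := by
        rw [bsum_eq hconn]
        simp only [hg', hN]
        rw [hdpz1]
      have q1 : (2*(D:ℝ)/(L:ℝ) - 2)*((L:ℝ)-1)
          = 2*(D:ℝ) - 2*(D:ℝ)/(L:ℝ) - 2*(L:ℝ) + 2 := by field_simp; ring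
      have q2 : ((D:ℝ)+1-2*(D:ℝ)/(L:ℝ))*((L:ℝ)-2)
          = (L:ℝ)*(D:ℝ) + (L:ℝ) - 4*(D:ℝ) - 2 + 4*(D:ℝ)/(L:ℝ) := by field_simp; ring
      have q3 : ((L:ℝ)-1)*((D:ℝ)+1-2*(D:ℝ)/(L:ℝ))
          = (L:ℝ)*(D:ℝ) + (L:ℝ) - 3*(D:ℝ) - 1 + 2*(D:ℝ)/(L:ℝ) := by field_simp; ring
      rw [hsplitN, hsum0, hsum1, hsum2, hs1, hs2] at hbz1'
      have hT5 : (∑ v ∈ F2, (g' v - ((L:ℝ) - 2))) ≤ 0 := by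
        linarith [hstar5, hbz1', hbp', q1, q2, q3]
      have hlowx2 := hlow2 x2 hx2mem
      have hpx2 : (G.dist p x2 : ℝ) = (L:ℝ) - 2 := by
        have := le_trans hsingle hT5
        simp only [hg'] at this hlowx2
        linarith
      ----------------------------------------------------------------
      -- Step 6 : the two-sided bound at x2
      ----------------------------------------------------------------
      set g : V → ℝ := fun v => (G.dist x0 v : ℝ) with hg
      have hf := dist_lip hconn x0
      have cntb : sphDeg G x0 x2 1 + sphDeg G x0 x2 2 + sphDeg G x0 x2 3 = D := by
        have := count_nbr hconn hreg (k := 1) (x0 := x0) (x := x2) (by omega)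
        norm_num at this
        exact this
      have cntbR : (sphDeg G x0 x2 1 : ℝ) + (sphDeg G x0 x2 2 : ℝ) + (sphDeg G x0 x2 3 : ℝ)
          = D := by exact_mod_cast cntb
      have hbx2 : bsum G g x2 = 2 + ((sphDeg G x0 x2 1 : ℝ) + 2 * (sphDeg G x0 x2 2 : ℝ)
          + 3 * (sphDeg G x0 x2 3 : ℝ)) := by
        rw [bsum_eq hconn, sum_nbr_dist hconn (k := 1) (show G.dist x0 x2 = 1 + 1 by omega)]
        simp only [hg, hx2]
        norm_num
      have hbzg : bsum G g z1 = 1 + (2*(D:ℝ) - 2*(D:ℝ)/(L:ℝ)) := by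
        rw [bsum_eq hconn, sum_nbr_dist hconn (k := 0) hz1]
        simp only [hg, hz1]
        push_cast
        norm_num
        linarith [e1z]
      have hbpg : bsum G g p = (L:ℝ) + (D:ℝ) * ((L:ℝ)-1) := by
        rw [bsum_eq hconn]
        have : ∀ v ∈ G.neighborFinset p, g v = (L:ℝ) - 1 := by
          intro v hv
          have := hA v ((G.mem_neighborFinset _ _).mp hv)
          have h' : (G.dist x0 v : ℝ) + 1 = (L:ℝ) := by exact_mod_cast this
          simp only [hg]; linarith
        rw [Finset.sum_congr rfl this, Finset.sum_const, G.card_neighborFinset_eq_degree,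
          hreg p]
        simp [hg, hp]
      have hup6 := star hconn hD hL hreg hBM g hf z1 x2
      have hd12 : G.dist z1 x2 = 1 := SimpleGraph.dist_eq_one_iff_adj.mpr h2
      rw [hd12] at hup6
      have hlo6 := star hconn hD hL hreg hBM g hf x2 p
      have hx2p : (G.dist x2 p : ℝ) = (L:ℝ) - 2 := by
        rw [SimpleGraph.dist_comm]; exact hpx2
      rw [hx2p] at hlo6
      push_cast at hup6
      have e2 : (sphDeg G x0 x2 1 : ℝ) + 2 * (sphDeg G x0 x2 2 : ℝ)
          + 3 * (sphDeg G x0 x2 3 : ℝ) = 3*(D:ℝ) - 4*(D:ℝ)/(L:ℝ) := by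
        linarith [hup6, hlo6, hbx2, hbzg, hbpg, q2]
      ----------------------------------------------------------------
      -- conclusion
      ----------------------------------------------------------------
      have e1x : (sphDeg G x0 x1 1 : ℝ) + 2 * (sphDeg G x0 x1 2 : ℝ)
          = 2*(D:ℝ) - 2*(D:ℝ)/(L:ℝ) := E1 hconn hD hL hreg hdiam hBM hp hx1
      have s0x : sphDeg G x0 x1 0 = 1 := sphDeg_zero hconn hx1
      have cntx : sphDeg G x0 x1 0 + sphDeg G x0 x1 1 + sphDeg G x0 x1 2 = D :=
        count_nbr hconn hreg (k := 0) hx1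
      rw [s0x] at cntx
      have cntxR : (1:ℝ) + (sphDeg G x0 x1 1 : ℝ) + (sphDeg G x0 x1 2 : ℝ) = D := by
        exact_mod_cast cntx
      linarith [e1x, cntxR, e2, cntbR]

end BMS
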